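/- Let a and b be positive semidefinite n × n complex matrices. If a ≤⊕ b, then a ≤_L b, i.e. b − a is positive semidefinite. -/

import Mathlib

open Pointwise Matrix ComplexOrder

/-- The right ideal `aR = {a*r : r ∈ R}`. -/
def rId {R : Type*} [Ring R] (a : R) : Set R := Set.range (fun r => a * r)

/-- The direct sum partial order: `a ≤⊕ b` iff `bR = aR ⊕ (b-a)R`. -/
def dsLE {R : Type*} [Ring R] (a b : R) : Prop :=
  rId a + rId (b - a) = rId b ∧ rId a ∩ rId (b - a) = {0}

/-- A pseudoinverse-like construction: for `b` psd there is a psd `m` with `b * m * b = b`. -/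
lemma exists_psd_pinv {n : ℕ} (b : Matrix (Fin n) (Fin n) ℂ) (hb : b.PosSemidef) :
    ∃ m : Matrix (Fin n) (Fin n) ℂ, m.PosSemidef ∧ b * m * b = b := by
  classical
  set U : Matrix (Fin n) (Fin n) ℂ := (hb.1.eigenvectorUnitary : Matrix (Fin n) (Fin n) ℂ)
  set D : Matrix (Fin n) (Fin n) ℂ :=
    Matrix.diagonal (RCLike.ofReal ∘ hb.1.eigenvalues)
  set Di : Matrix (Fin n) (Fin n) ℂ :=
    Matrix.diagonal (fun i => ((hb.1.eigenvalues i : ℂ))⁻¹)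
  have hU : star U * U = 1 := Unitary.coe_star_mul_self hb.1.eigenvectorUnitary
  have hspec : b = U * D * star U := hb.1.spectral_theorem
  refine ⟨U * Di * star U, ?_, ?_⟩
  · have hDi : Di.PosSemidef := by
      refine Matrix.posSemidef_diagonal_iff.mpr fun i => ?_
      have h0 : (0:ℝ) ≤ (hb.1.eigenvalues i)⁻¹ := inv_nonneg.mpr (hb.eigenvalues_nonneg i)
      rw [show ((hb.1.eigenvalues i : ℂ))⁻¹ = (((hb.1.eigenvalues i)⁻¹ : ℝ) : ℂ) by
        push_cast; ring]
      exact_mod_cast Complex.zero_le_real.mpr h0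
    simpa [Matrix.star_eq_conjTranspose] using hDi.mul_mul_conjTranspose_same U
  · rw [hspec]
    have hDDD : D * Di * D = D := by
      ext i j
      simp only [D, Di, Matrix.diagonal_mul_diagonal, Matrix.diagonal_apply]
      by_cases hij : i = j
      · subst hij
        simp only [if_pos rfl, Function.comp_apply]
        by_cases h0 : (hb.1.eigenvalues i : ℂ) = 0
        · simp [h0]
        · simp only [↓reduceIte]; field_simp; exact (sq _).trans rfl
      · simp [hij]
    calc U * D * star U * (U * Di * star U) * (U * D * star U)
        = U * (D * (star U * U) * Di * (star U * U) * D) * star U := by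
          simp only [Matrix.mul_assoc]
      _ = U * (D * Di * D) * star U := by rw [hU]; simp [Matrix.mul_assoc]
      _ = U * D * star U := by rw [hDDD, Matrix.mul_assoc]

theorem stmt15 {n : ℕ} (a b : Matrix (Fin n) (Fin n) ℂ)
    (ha : a.PosSemidef) (hb : b.PosSemidef) (h : dsLE a b) :
    (b - a).PosSemidef := by
  classical
  set c := b - a with hc
  obtain ⟨m, hm, hbmb⟩ := exists_psd_pinv b hb
  -- a and c are in bR
  have hmemsum : ∀ x ∈ rId a + rId c, x ∈ rId b := fun x hx => h.1 ▸ hx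
  have hsa : a ∈ rId a := ⟨1, mul_one a⟩
  have hsc : c ∈ rId c := ⟨1, mul_one c⟩
  have h0a : (0 : Matrix (Fin n) (Fin n) ℂ) ∈ rId a := ⟨0, mul_zero a⟩
  have h0c : (0 : Matrix (Fin n) (Fin n) ℂ) ∈ rId c := ⟨0, mul_zero c⟩
  have hamem : a ∈ rId b := by
    apply hmemsum
    have := Set.add_mem_add hsa h0c
    rwa [add_zero] at this
  have hcmem : c ∈ rId b := by
    apply hmemsum
    have := Set.add_mem_add h0a hsc
    rwa [zero_add] at this
  obtain ⟨r, hr⟩ := hamem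
  obtain ⟨r', hr'⟩ := hcmem
  simp only at hr hr'
  -- b * m * c = c and b * m * a = a
  have hbmc : b * m * c = c := by rw [← hr', ← Matrix.mul_assoc, hbmb]
  have hbma : b * m * a = a := by rw [← hr, ← Matrix.mul_assoc, hbmb]
  -- key : a * m * c = 0, since it lies in rId a ∩ rId c = {0}
  have hamc : a * m * c = 0 := by
    have h1 : a * m * c ∈ rId a := ⟨m * c, (Matrix.mul_assoc a m c).symm⟩
    have h2 : a * m * c ∈ rId c := by
      refine ⟨1 - m * c, ?_⟩
      have : a * m * c = c - c * m * c := by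
        have : (b - c) * m * c = b * m * c - c * m * c := by noncomm_ring
        have hac : a * m * c = b * m * c - c * m * c := by
          rw [show a = b - c from (sub_sub_cancel b a).symm]; exact this
        rw [hac, hbmc]
      rw [this]; noncomm_ring
    have := h.2 ▸ Set.mem_inter h1 h2
    simpa using this
  -- hermitian facts
  have hah : aᴴ = a := ha.1
  have hbh : bᴴ = b := hb.1
  have hch : cᴴ = c := by rw [hc]; simp [Matrix.conjTranspose_sub, hah, hbh]
  have hmh : mᴴ = m := hm.1
  -- c * m * a = 0 by taking conjTranspose
  have hcma : c * m * a = 0 := by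
    have := congrArg Matrix.conjTranspose hamc
    simpa [Matrix.conjTranspose_mul, Matrix.mul_assoc, hah, hch, hmh] using this
  -- c * m * b = c
  have hcmb : c * m * b = c := by
    have := congrArg Matrix.conjTranspose hbmc
    simpa [Matrix.conjTranspose_mul, Matrix.mul_assoc, hbh, hch, hmh] using this
  -- c = c * m * c
  have hcmc : c * m * c = c := by
    have : c * m * (b - a) = c * m * b - c * m * a := by noncomm_ring
    rw [← hc] at this
    rw [this, hcma, hcmb, sub_zero]
  -- conclude
  have : (cᴴ * m * c).PosSemidef := hm.conjTranspose_mul_mul_same c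
  rw [hch, hcmc] at this
  exact this
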